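/- Let 𝖪_μ, 𝖠_μ, 𝖷_μ, 𝖲_μ ∈ M_m(ℂ) for μ ∈ {0,1,2,3}; define the operators 𝔡_μ = {𝖪_μ + 𝖠_μ, ·}_{e_μ} and 𝔵_μ = {𝖷_μ + 𝖲_μ, ·}_{e_{μ̂}} on M_m(ℂ), and let D_ω = Σ_μ ( γ^μ ⊗ 𝔡_μ + γ^{μ̂} ⊗ 𝔵_μ ) acting on ℂ^k ⊗ M_m(ℂ). Then D_ω² = Σ_{μ,ν} η^{μν} 1_k ⊗ (𝔡_μ ∘ 𝔡_ν) + (1/2) Σ_{μ,ν} γ^μ γ^ν ⊗ [𝔡_μ, 𝔡_ν] − det(η) Σ_μ e_μ 1_k ⊗ (𝔵_μ ∘ 𝔵_μ) + Σ_{μ<ν} t_{μν} γ^μ γ^ν ⊗ [𝔵_μ, 𝔵_ν] + (1/2) Σ_{μ,ν,σ,α} s_{μνασ} γ^α γ^σ ⊗ {𝔵_ν, 𝔡_μ} + Σ_μ (−1)^μ (γ^0 γ^1 γ^2 γ^3) ⊗ [𝔡_μ, 𝔵_μ], where s_{μνασ} = e_μ (−1)^μ sgn(ν−μ) sgn(σ−α)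 δ_{μνασ}, t_{μν} = (−1)^{1+|μ−ν|} Σ_{λ<ρ} δ_{μνλρ} e_λ e_ρ, and det(η) = e_0 e_1 e_2 e_3. (Paper: Proposition 4.7, the Weitzenböck formula for the fluctuated Dirac operator.) -/

import Mathlib

open Matrix

noncomputable section

/-- `δ_{μνασ}`: 1 if the four indices are pairwise distinct, 0 otherwise. -/
def delta4 (μ ν α σ : Fin 4) : ℂ :=
  if μ ≠ ν ∧ μ ≠ α ∧ μ ≠ σ ∧ ν ≠ α ∧ ν ≠ σ ∧ α ≠ σ then 1 else 0

/-- The sign `s_{μνασ} = e_μ (−1)^μ sgn(ν−μ) sgn(σ−α) δ_{μνασ}`. -/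
def sSign (e : Fin 4 → ℂ) (μ ν α σ : Fin 4) : ℂ :=
  e μ * (-1 : ℂ) ^ (μ : ℕ) * (((ν : ℤ) - (μ : ℤ)).sign : ℂ) *
    (((σ : ℤ) - (α : ℤ)).sign : ℂ) * delta4 μ ν α σ

/-- The sign `t_{μν} = (−1)^{1+|μ−ν|} Σ_{λ<ρ} δ_{μνλρ} e_λ e_ρ`. -/
def tSign (e : Fin 4 → ℂ) (μ ν : Fin 4) : ℂ :=
  (-1 : ℂ) ^ (1 + ((μ : ℤ) - (ν : ℤ)).natAbs) *
    ∑ lam : Fin 4, ∑ rho : Fin 4,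
      if (lam : ℕ) < (rho : ℕ) then delta4 μ ν lam rho * e lam * e rho else 0

/-- The operator `g ⊗ T` on `ℂ^k ⊗ M_m(ℂ) ≅ (Fin k → M_m(ℂ))`. -/
def matOp {k : ℕ} {V : Type*} [AddCommGroup V] [Module ℂ V]
    (g : Matrix (Fin k) (Fin k) ℂ) (T : Module.End ℂ V) :
    Module.End ℂ (Fin k → V) where
  toFun f i := ∑ j, g i j • T (f j)
  map_add' f h := by
    funext i
    simp [map_add, smul_add, Finset.sum_add_distrib]
  map_smul' c f := by
    funext i
    simp only [Pi.smul_apply, _root_.map_smul, RingHom.id_apply]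
    rw [Finset.smul_sum]
    exact Finset.sum_congr rfl fun j _ => smul_comm _ _ _

/-- The generalized (anti-)commutator `{M, ·}_e : T ↦ M T + e T M`. -/
def brkt {m : ℕ} (M : Matrix (Fin m) (Fin m) ℂ) (e : ℂ) :
    Module.End ℂ (Matrix (Fin m) (Fin m) ℂ) :=
  LinearMap.mulLeft ℂ M + e • LinearMap.mulRight ℂ M

section matOpLemmas

variable {k : ℕ} {V : Type*} [AddCommGroup V] [Module ℂ V]

lemma matOp_apply (g : Matrix (Fin k) (Fin k) ℂ) (T : Module.End ℂ V) (f : Fin k → V) (i : Fin k) :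
    matOp g T f i = ∑ j, g i j • T (f j) := rfl

lemma matOp_mul (g h : Matrix (Fin k) (Fin k) ℂ) (T S : Module.End ℂ V) :
    matOp g T * matOp h S = matOp (g * h) (T * S) := by
  apply LinearMap.ext; intro f; funext i
  simp only [Module.End.mul_apply, matOp_apply, Matrix.mul_apply, Finset.sum_smul, map_sum,
    _root_.map_smul, Finset.smul_sum, smul_smul]
  rw [Finset.sum_comm]

lemma matOp_add_left (g h : Matrix (Fin k) (Fin k) ℂ) (T : Module.End ℂ V) :
    matOp (g + h) T = matOp g T + matOp h T := by
  apply LinearMap.ext; intro f; funext i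
  simp [matOp_apply, add_smul, Finset.sum_add_distrib]

lemma matOp_add_right (g : Matrix (Fin k) (Fin k) ℂ) (T S : Module.End ℂ V) :
    matOp g (T + S) = matOp g T + matOp g S := by
  apply LinearMap.ext; intro f; funext i
  simp [matOp_apply, smul_add, Finset.sum_add_distrib]

lemma matOp_smul_left (c : ℂ) (g : Matrix (Fin k) (Fin k) ℂ) (T : Module.End ℂ V) :
    matOp (c • g) T = c • matOp g T := by
  apply LinearMap.ext; intro f; funext i
  simp [matOp_apply, smul_smul, Finset.smul_sum]

lemma matOp_smul_right (c : ℂ) (g : Matrix (Fin k) (Fin k) ℂ) (T : Module.End ℂ V) :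
    matOp g (c • T) = c • matOp g T := by
  apply LinearMap.ext; intro f; funext i
  simp [matOp_apply, smul_smul, Finset.smul_sum, mul_comm]

lemma matOp_neg_left (g : Matrix (Fin k) (Fin k) ℂ) (T : Module.End ℂ V) :
    matOp (-g) T = -matOp g T := by
  apply LinearMap.ext; intro f; funext i
  simp [matOp_apply, Finset.sum_neg_distrib]

lemma matOp_sub_right (g : Matrix (Fin k) (Fin k) ℂ) (T S : Module.End ℂ V) :
    matOp g (T - S) = matOp g T - matOp g S := by
  apply LinearMap.ext; intro f; funext i
  simp [matOp_apply, smul_sub, Finset.sum_sub_distrib]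

end matOpLemmas

lemma sgn_eval : ∀ a b : Fin 4, (((b:ℕ):ℤ) - ((a:ℕ):ℤ)).sign
    = if (a:ℕ) < (b:ℕ) then 1 else if a = b then 0 else -1 := by decide

set_option maxHeartbeats 4000000 in
theorem stmt8 (p q k m : ℕ) (hpq : p + q = 4) (hk : 1 ≤ k) (hm : 1 ≤ m)
    (e : Fin 4 → ℂ) (he : ∀ μ, e μ = if (μ : ℕ) < p then 1 else -1)
    (γ : Fin 4 → Matrix (Fin k) (Fin k) ℂ)
    (hCl : ∀ μ ν, γ μ * γ ν + γ ν * γ μ =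
      (2 * if μ = ν then e μ else 0) • (1 : Matrix (Fin k) (Fin k) ℂ))
    (hAdj : ∀ μ, (γ μ)ᴴ = e μ • γ μ)
    (γh : Fin 4 → Matrix (Fin k) (Fin k) ℂ)
    (hγh0 : γh 0 = γ 1 * γ 2 * γ 3) (hγh1 : γh 1 = γ 0 * γ 2 * γ 3)
    (hγh2 : γh 2 = γ 0 * γ 1 * γ 3) (hγh3 : γh 3 = γ 0 * γ 1 * γ 2)
    (eh : Fin 4 → ℂ) (heh : ∀ μ, eh μ = (-1 : ℂ) ^ (q + 1) * e μ)
    (K A X S : Fin 4 → Matrix (Fin m) (Fin m) ℂ)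
    (kop xop : Fin 4 → Module.End ℂ (Matrix (Fin m) (Fin m) ℂ))
    (hkop : ∀ μ, kop μ = brkt (K μ + A μ) (e μ))
    (hxop : ∀ μ, xop μ = brkt (X μ + S μ) (eh μ))
    (D : Module.End ℂ (Fin k → Matrix (Fin m) (Fin m) ℂ))
    (hD : D = ∑ μ, (matOp (γ μ) (kop μ) + matOp (γh μ) (xop μ))) :
    D * D =
      (∑ μ, ∑ ν, (if μ = ν then e μ else 0) • matOp 1 (kop μ * kop ν))
      + (1 / 2 : ℂ) • (∑ μ, ∑ ν, matOp (γ μ * γ ν) (kop μ * kop ν - kop ν * kop μ))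
      - (e 0 * e 1 * e 2 * e 3) • (∑ μ, e μ • matOp 1 (xop μ * xop μ))
      + (∑ μ : Fin 4, ∑ ν : Fin 4, if (μ : ℕ) < (ν : ℕ) then
          tSign e μ ν • matOp (γ μ * γ ν) (xop μ * xop ν - xop ν * xop μ) else 0)
      + (1 / 2 : ℂ) • (∑ μ : Fin 4, ∑ ν : Fin 4, ∑ σ : Fin 4, ∑ α : Fin 4,
          sSign e μ ν α σ • matOp (γ α * γ σ) (xop ν * kop μ + kop μ * xop ν))
      + (∑ μ : Fin 4, ((-1 : ℂ) ^ (μ : ℕ)) •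
          matOp (γ 0 * γ 1 * γ 2 * γ 3) (kop μ * xop μ - xop μ * kop μ)) := by
  have esq : ∀ i, e i * e i = 1 := by
    intro i; rw [he]; split <;> norm_num
  have esq2 : ∀ i, e i ^ 2 = 1 := fun i => by rw [sq, esq]
  have sq : ∀ i, γ i * γ i = e i • (1 : Matrix (Fin k) (Fin k) ℂ) := by
    intro i
    have h := hCl i i
    rw [if_pos rfl] at h
    have h2 : (2:ℂ) • (γ i * γ i) = (2:ℂ) • (e i • (1 : Matrix (Fin k) (Fin k) ℂ)) := by
      rw [two_smul, h, mul_smul]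
    exact smul_right_injective _ (two_ne_zero) h2
  have sw : ∀ i j, i ≠ j → γ j * γ i = -(γ i * γ j) := by
    intro i j hij
    have h := hCl i j
    rw [if_neg hij] at h
    simp only [mul_zero, zero_smul] at h
    exact eq_neg_of_add_eq_zero_right h
  have sq' : ∀ i (x : Matrix (Fin k) (Fin k) ℂ), γ i * (γ i * x) = e i • x := by
    intro i x; rw [← mul_assoc, sq i, smul_mul_assoc, one_mul]
  have sw' : ∀ i j, i ≠ j → ∀ x, γ j * (γ i * x) = -(γ i * (γ j * x)) := by
    intro i j hij x; rw [← mul_assoc, sw i j hij, neg_mul, mul_assoc]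
  have s0 := sq 0; have s1 := sq 1; have s2 := sq 2; have s3 := sq 3
  have s0' := sq' 0; have s1' := sq' 1; have s2' := sq' 2; have s3' := sq' 3
  have w01 := sw 0 1 (by decide); have w02 := sw 0 2 (by decide)
  have w03 := sw 0 3 (by decide); have w12 := sw 1 2 (by decide)
  have w13 := sw 1 3 (by decide); have w23 := sw 2 3 (by decide)
  have w01' := sw' 0 1 (by decide); have w02' := sw' 0 2 (by decide)
  have w03' := sw' 0 3 (by decide); have w12' := sw' 1 2 (by decide)
  have w13' := sw' 1 3 (by decide); have w23' := sw' 2 3 (by decide)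
  have h3 : (((3:Fin 4):ℕ):ℤ) = 3 := by decide
  have sg1 : Int.sign 1 = 1 := rfl
  have sg2 : Int.sign 2 = 1 := rfl
  have sg3 : Int.sign 3 = 1 := rfl
  subst hD
  rw [Finset.sum_mul_sum]
  simp only [add_mul, mul_add, matOp_mul, Fin.sum_univ_four, hγh0, hγh1, hγh2, hγh3]
  simp (config := { decide := true, maxSteps := 10000000 }) only [tSign, sSign, delta4,
    Fin.sum_univ_four, sgn_eval, h3, sg1, sg2, sg3, Int.sign_neg, Int.sign_zero,
    mul_assoc, s0, s1, s2, s3, s0', s1', s2', s3',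
    w01, w02, w03, w12, w13, w23, w01', w02', w03', w12', w13', w23',
    matOp_smul_left, matOp_smul_right, matOp_add_right, matOp_sub_right, matOp_neg_left,
    smul_smul, mul_one, one_mul, neg_neg, mul_neg, neg_mul, smul_neg, mul_smul_comm, smul_mul_assoc,
    zero_smul, smul_zero, add_zero, zero_add, mul_zero, zero_mul,
    Int.cast_one, Int.cast_neg, Int.cast_zero, Int.reduceSub, Int.reduceNeg,
    if_true, if_false, reduceIte]
  match_scalars
  all_goals try norm_num [show ((-1:ℤ)).sign = -1 from rfl, show ((-2:ℤ)).sign = -1 from rfl,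
    show ((-3:ℤ)).sign = -1 from rfl, sg1, sg2, sg3, esq, esq2,
    show ((0:Fin 4):ℕ) = 0 from rfl, show ((1:Fin 4):ℕ) = 1 from rfl,
    show ((2:Fin 4):ℕ) = 2 from rfl, show ((3:Fin 4):ℕ) = 3 from rfl]
  all_goals try ring
  all_goals try (ring_nf; simp only [esq2, esq]; try norm_num)
  all_goals simp only [esq2, esq, mul_one]
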